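/- Let γ ∈ Ω with γ ≠ 0. If D is a derivation of SV = SV[Γ,s] of degree γ satisfying D(L_{0,0}) = 0, then D = 0. -/

import Mathlib

noncomputable section

namespace SVSuper

variable (Γ : AddSubgroup ℂ) (s : ℂ)

/-- Basis index type of `SV[Γ,s]`: `Sum.inl (α, i)` stands for `L_{α,i}` (`α ∈ Γ`),
`Sum.inr (μ, j)` stands for `G_{μ,j}` (`μ ∈ s + Γ`). -/
abbrev Idx : Type := (Γ × ℕ) ⊕ ({μ : ℂ // μ - s ∈ Γ} × ℕ)

/-- The underlying vector space of `SV[Γ,s]`: the free `ℂ`-module on `Idx`. -/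
abbrev SV : Type := Idx Γ s →₀ ℂ

/-- The basis vector `L_{α,i}`. -/
def lgen (α : ℂ) (hα : α ∈ Γ) (i : ℕ) : SV Γ s :=
  Finsupp.single (Sum.inl (⟨α, hα⟩, i)) 1

/-- The basis vector `G_{μ,j}`. -/
def ggen (μ : ℂ) (hμ : μ - s ∈ Γ) (j : ℕ) : SV Γ s :=
  Finsupp.single (Sum.inr (⟨μ, hμ⟩, j)) 1

theorem memLG {α μ : ℂ} (hα : α ∈ Γ) (hμ : μ - s ∈ Γ) : α + μ - s ∈ Γ := by
  have h : α + μ - s = α + (μ - s) := by ring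
  rw [h]; exact add_mem hα hμ

theorem memGG (hs : 2 * s ∈ Γ) {μ ν : ℂ} (hμ : μ - s ∈ Γ) (hν : ν - s ∈ Γ) :
    μ + ν ∈ Γ := by
  have h : μ + ν = (μ - s) + (ν - s) + 2 * s := by ring
  rw [h]; exact add_mem (add_mem hμ hν) hs

/-- The bracket on basis vectors (any symbol with second index `-1` is interpreted as `0`;
here this is automatic since the corresponding coefficient vanishes when `i = j = 0`). -/
def bk (hs : 2 * s ∈ Γ) : Idx Γ s → Idx Γ s → SV Γ s
  | Sum.inl (⟨α, hα⟩, i), Sum.inl (⟨β, hβ⟩, j) =>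
      (β - α) • lgen Γ s (α + β) (add_mem hα hβ) (i + j)
        + ((j : ℂ) - (i : ℂ)) • lgen Γ s (α + β) (add_mem hα hβ) (i + j - 1)
  | Sum.inl (⟨α, hα⟩, i), Sum.inr (⟨μ, hμ⟩, j) =>
      (μ - α / 2) • ggen Γ s (α + μ) (memLG Γ s hα hμ) (i + j)
        + ((j : ℂ) - (i : ℂ) / 2) • ggen Γ s (α + μ) (memLG Γ s hα hμ) (i + j - 1)
  | Sum.inr (⟨μ, hμ⟩, i), Sum.inl (⟨α, hα⟩, j) =>
      -((μ - α / 2) • ggen Γ s (α + μ) (memLG Γ s hα hμ) (j + i)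
        + ((i : ℂ) - (j : ℂ) / 2) • ggen Γ s (α + μ) (memLG Γ s hα hμ) (j + i - 1))
  | Sum.inr (⟨μ, hμ⟩, i), Sum.inr (⟨ν, hν⟩, j) =>
      (2 : ℂ) • lgen Γ s (μ + ν) (memGG Γ s hs hμ hν) (i + j)

/-- The bilinear bracket of `SV[Γ,s]`. -/
def bkt (hs : 2 * s ∈ Γ) (x y : SV Γ s) : SV Γ s :=
  x.sum fun a ca => y.sum fun b cb => (ca * cb) • bk Γ s hs a b

/-- `x` lies in the even part `SV_0̄` (the span of the `L_{α,i}`). -/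
def IsEvenElt (x : SV Γ s) : Prop := ∀ b, x (Sum.inr b) = 0

/-- `x` lies in the odd part `SV_1̄` (the span of the `G_{μ,j}`). -/
def IsOddElt (x : SV Γ s) : Prop := ∀ a, x (Sum.inl a) = 0

/-- `x` is `ℤ₂`-homogeneous. -/
def IsHomog (x : SV Γ s) : Prop := IsEvenElt Γ s x ∨ IsOddElt Γ s x

/-- `x` lies in the degree-`γ` component `SV_γ = span{L_{γ,i}, G_{γ,i}}` of the `Ω`-grading. -/
def InDeg (γ : ℂ) (x : SV Γ s) : Prop :=
  (∀ p : Γ × ℕ, (p.1 : ℂ) ≠ γ → x (Sum.inl p) = 0) ∧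
  (∀ q : {μ : ℂ // μ - s ∈ Γ} × ℕ, (q.1 : ℂ) ≠ γ → x (Sum.inr q) = 0)

/-- The group `Ω`, generated by `Γ ∪ {s}`. -/
def Omega : AddSubgroup ℂ := Γ ⊔ AddSubgroup.closure {s}

theorem gamma_mem_Omega {α : ℂ} (hα : α ∈ Γ) : α ∈ Omega Γ s :=
  AddSubgroup.mem_sup_left hα

theorem s_mem_Omega : s ∈ Omega Γ s :=
  AddSubgroup.mem_sup_right (AddSubgroup.subset_closure (Set.mem_singleton s))

theorem smu_mem_Omega {μ : ℂ} (hμ : μ - s ∈ Γ) : μ ∈ Omega Γ s := by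
  have h := add_mem (gamma_mem_Omega Γ s hμ) (s_mem_Omega Γ s)
  rwa [sub_add_cancel] at h

/-- The `Ω`-degree of a basis index. -/
def idxDeg : Idx Γ s → ℂ
  | Sum.inl p => (p.1 : ℂ)
  | Sum.inr q => (q.1 : ℂ)

theorem idxDeg_mem (a : Idx Γ s) : idxDeg Γ s a ∈ Omega Γ s := by
  cases a with
  | inl p => exact gamma_mem_Omega Γ s p.1.2
  | inr q => exact smu_mem_Omega Γ s q.1.2

/-- The derivation `D_φ` attached to a group homomorphism `φ : (Ω,+) → (ℂ,+)`:
`D_φ (L_{α,i}) = φ(α) • L_{α,i}` and `D_φ (G_{μ,j}) = φ(μ) • G_{μ,j}`. -/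
def Dphi (φ : ↥(Omega Γ s) →+ ℂ) : SV Γ s →ₗ[ℂ] SV Γ s :=
  Finsupp.lsum ℂ fun a => φ ⟨idxDeg Γ s a, idxDeg_mem Γ s a⟩ • Finsupp.lsingle a

/-- `D` is a parity-`0` (even) derivation of `SV[Γ,s]`. -/
def IsEvenDer (hs : 2 * s ∈ Γ) (D : SV Γ s →ₗ[ℂ] SV Γ s) : Prop :=
  (∀ x, IsEvenElt Γ s x → IsEvenElt Γ s (D x)) ∧
  (∀ x, IsOddElt Γ s x → IsOddElt Γ s (D x)) ∧
  (∀ x y, IsHomog Γ s x →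
    D (bkt Γ s hs x y) = bkt Γ s hs (D x) y + bkt Γ s hs x (D y))

/-- `D` is a parity-`1` (odd) derivation of `SV[Γ,s]`. -/
def IsOddDer (hs : 2 * s ∈ Γ) (D : SV Γ s →ₗ[ℂ] SV Γ s) : Prop :=
  (∀ x, IsEvenElt Γ s x → IsOddElt Γ s (D x)) ∧
  (∀ x, IsOddElt Γ s x → IsEvenElt Γ s (D x)) ∧
  (∀ x y, IsEvenElt Γ s x →
    D (bkt Γ s hs x y) = bkt Γ s hs (D x) y + bkt Γ s hs x (D y)) ∧
  (∀ x y, IsOddElt Γ s x →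
    D (bkt Γ s hs x y) = bkt Γ s hs (D x) y - bkt Γ s hs x (D y))

/-- `D` is a derivation of `SV[Γ,s]`: a sum of an even and an odd derivation. -/
def IsDer (hs : 2 * s ∈ Γ) (D : SV Γ s →ₗ[ℂ] SV Γ s) : Prop :=
  ∃ D0 D1, IsEvenDer Γ s hs D0 ∧ IsOddDer Γ s hs D1 ∧ D = D0 + D1

/-- `D` has degree `γ`: it maps `SV_δ` into `SV_{δ+γ}` for every `δ`. -/
def HasDeg (γ : ℂ) (D : SV Γ s →ₗ[ℂ] SV Γ s) : Prop :=
  ∀ (δ : ℂ) (x : SV Γ s), InDeg Γ s δ x → InDeg Γ s (δ + γ) (D x)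

/-- `ψ` is a 2-cocycle on `SV[Γ,s]` (super skew-symmetry and super Jacobi identity,
with the sign `(-1)^{|x||y|}` spelled out according to the parities). -/
def IsCocycle (hs : 2 * s ∈ Γ) (ψ : SV Γ s →ₗ[ℂ] SV Γ s →ₗ[ℂ] ℂ) : Prop :=
  (∀ x y, IsHomog Γ s x → IsHomog Γ s y → (IsEvenElt Γ s x ∨ IsEvenElt Γ s y) →
    ψ x y = - ψ y x) ∧
  (∀ x y, IsOddElt Γ s x → IsOddElt Γ s y → ψ x y = ψ y x) ∧
  (∀ x y z, IsHomog Γ s x → IsHomog Γ s y → (IsEvenElt Γ s x ∨ IsEvenElt Γ s y) →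
    ψ x (bkt Γ s hs y z) = ψ (bkt Γ s hs x y) z + ψ y (bkt Γ s hs x z)) ∧
  (∀ x y z, IsOddElt Γ s x → IsOddElt Γ s y →
    ψ x (bkt Γ s hs y z) = ψ (bkt Γ s hs x y) z - ψ y (bkt Γ s hs x z))

/-- `f : SV → ℂ` satisfies the recursive formulas associated to the 2-cocycle `ψ`. -/
def IsAssocMap (hs : 2 * s ∈ Γ) (ψ : SV Γ s →ₗ[ℂ] SV Γ s →ₗ[ℂ] ℂ)
    (f : SV Γ s →ₗ[ℂ] ℂ) : Prop :=
  (∀ i : ℕ, f (lgen Γ s 0 (zero_mem Γ) i)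
      = ψ (lgen Γ s 0 (zero_mem Γ) 0) (lgen Γ s 0 (zero_mem Γ) (i + 1)) / (i + 1)) ∧
  (∀ (α : ℂ) (hα : α ∈ Γ) (i : ℕ), α ≠ 0 →
    f (lgen Γ s α hα i)
      = (ψ (lgen Γ s 0 (zero_mem Γ) 0) (lgen Γ s α hα i) - (i : ℂ) * f (lgen Γ s α hα (i - 1))) / α) ∧
  (∀ (h0 : (0 : ℂ) - s ∈ Γ) (i : ℕ),
    f (ggen Γ s 0 h0 i) = (2 / (2 * (i : ℂ) - 1)) * ψ (lgen Γ s 0 (zero_mem Γ) 1) (ggen Γ s 0 h0 i)) ∧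
  (∀ (μ : ℂ) (hμ : μ - s ∈ Γ) (i : ℕ), μ ≠ 0 →
    f (ggen Γ s μ hμ i)
      = (ψ (lgen Γ s 0 (zero_mem Γ) 0) (ggen Γ s μ hμ i) - (i : ℂ) * f (ggen Γ s μ hμ (i - 1))) / μ)

/-! ### Auxiliary material for the proof -/

def htI : Idx Γ s → ℕ
  | Sum.inl p => p.2
  | Sum.inr q => q.2

def predI : Idx Γ s → Idx Γ s
  | Sum.inl (x, j) => Sum.inl (x, j - 1)
  | Sum.inr (x, j) => Sum.inr (x, j - 1)

def succI : Idx Γ s → Idx Γ s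
  | Sum.inl (x, j) => Sum.inl (x, j + 1)
  | Sum.inr (x, j) => Sum.inr (x, j + 1)

lemma htI_succI (b : Idx Γ s) : htI Γ s (succI Γ s b) = htI Γ s b + 1 := by
  rcases b with ⟨x, j⟩ | ⟨x, j⟩ <;> rfl

lemma predI_succI (b : Idx Γ s) : predI Γ s (succI Γ s b) = b := by
  rcases b with ⟨x, j⟩ | ⟨x, j⟩ <;> simp [predI, succI]

lemma succI_predI (b : Idx Γ s) (h : htI Γ s b ≠ 0) : succI Γ s (predI Γ s b) = b := by
  rcases b with ⟨x, j⟩ | ⟨x, j⟩ <;> simp [htI] at h <;> simp [predI, succI] <;> omega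

lemma succI_ne_self (b : Idx Γ s) : succI Γ s b ≠ b := by
  intro h
  have h1 := htI_succI Γ s b
  rw [h] at h1
  omega

lemma idxDeg_succI (b : Idx Γ s) : idxDeg Γ s (succI Γ s b) = idxDeg Γ s b := by
  rcases b with ⟨x, j⟩ | ⟨x, j⟩ <;> rfl

lemma htI_predI (b : Idx Γ s) : htI Γ s (predI Γ s b) = htI Γ s b - 1 := by
  rcases b with ⟨x, j⟩ | ⟨x, j⟩ <;> rfl

lemma predI_ne_self (b : Idx Γ s) (h : htI Γ s b ≠ 0) : predI Γ s b ≠ b := by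
  intro h2
  have h1 := htI_predI Γ s b
  rw [h2] at h1
  omega

lemma bkt_single_single (hs : 2 * s ∈ Γ) (a b : Idx Γ s) (ca cb : ℂ) :
    bkt Γ s hs (Finsupp.single a ca) (Finsupp.single b cb) = (ca * cb) • bk Γ s hs a b := by
  unfold bkt
  rw [Finsupp.sum_single_index (by simp), Finsupp.sum_single_index (by simp)]

lemma bkt_zero_right (hs : 2 * s ∈ Γ) (x : SV Γ s) : bkt Γ s hs x 0 = 0 := by
  unfold bkt
  simp

lemma bkt_zero_left (hs : 2 * s ∈ Γ) (y : SV Γ s) : bkt Γ s hs 0 y = 0 := by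
  unfold bkt
  exact Finsupp.sum_zero_index

lemma bkt_add_right (hs : 2 * s ∈ Γ) (x y y' : SV Γ s) :
    bkt Γ s hs x (y + y') = bkt Γ s hs x y + bkt Γ s hs x y' := by
  unfold bkt
  rw [← Finsupp.sum_add]
  congr 1
  funext a ca
  exact Finsupp.sum_add_index' (by simp) (by intro b c1 c2; rw [mul_add, add_smul])

lemma bkt_add_left (hs : 2 * s ∈ Γ) (x x' y : SV Γ s) :
    bkt Γ s hs (x + x') y = bkt Γ s hs x y + bkt Γ s hs x' y := by
  unfold bkt
  refine Finsupp.sum_add_index' (by simp) ?_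
  intro a c1 c2
  rw [← Finsupp.sum_add]
  congr 1
  funext b cb
  rw [add_mul, add_smul]

lemma bk_L00 (hs : 2 * s ∈ Γ) (a : Idx Γ s) :
    bk Γ s hs (Sum.inl (⟨0, zero_mem Γ⟩, 0)) a
      = idxDeg Γ s a • Finsupp.single a 1
        + (htI Γ s a : ℂ) • Finsupp.single (predI Γ s a) 1 := by
  obtain (⟨⟨β, hβ⟩, j⟩ | ⟨⟨μ, hμ⟩, j⟩) := a <;>
    simp [bk, lgen, ggen, idxDeg, htI, predI]

lemma bkt_L00_single (hs : 2 * s ∈ Γ) (b : Idx Γ s) (c : ℂ) :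
    bkt Γ s hs (lgen Γ s 0 (zero_mem Γ) 0) (Finsupp.single b c)
      = idxDeg Γ s b • Finsupp.single b c
        + (htI Γ s b : ℂ) • Finsupp.single (predI Γ s b) c := by
  unfold lgen
  rw [bkt_single_single, one_mul, bk_L00,
    ← Finsupp.smul_single_one b c, ← Finsupp.smul_single_one (predI Γ s b) c]
  module

lemma bkt_L00_apply (hs : 2 * s ∈ Γ) (y : SV Γ s) (b : Idx Γ s) :
    bkt Γ s hs (lgen Γ s 0 (zero_mem Γ) 0) y b
      = idxDeg Γ s b * y b + ((htI Γ s b : ℂ) + 1) * y (succI Γ s b) := by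
  induction y using Finsupp.induction_linear with
  | zero => simp [bkt_zero_right]
  | add f g hf hg =>
      rw [bkt_add_right, Finsupp.add_apply, hf, hg, Finsupp.add_apply, Finsupp.add_apply]
      ring
  | single b' c =>
      rw [bkt_L00_single, Finsupp.add_apply, Finsupp.smul_apply, Finsupp.smul_apply,
        smul_eq_mul, smul_eq_mul]
      rcases eq_or_ne b' (succI Γ s b) with rfl | hne
      · rw [predI_succI, htI_succI,
          Finsupp.single_eq_of_ne' (succI_ne_self Γ s b), Finsupp.single_eq_same,
          Finsupp.single_eq_same]
        push_cast
        ring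
      · rw [Finsupp.single_eq_of_ne' hne, mul_zero, add_zero]
        rcases eq_or_ne b' b with rfl | hbb
        · rw [Finsupp.single_eq_same]
          rcases eq_or_ne (htI Γ s b') 0 with h0 | h0
          · rw [h0]
            push_cast
            ring
          · rw [Finsupp.single_eq_of_ne' (predI_ne_self Γ s b' h0), mul_zero, add_zero]
        · rw [Finsupp.single_eq_of_ne' hbb, mul_zero, mul_zero]
          rcases eq_or_ne (htI Γ s b') 0 with h0 | h0
          · rw [h0]
            push_cast
            ring
          · rw [Finsupp.single_eq_of_ne' ?_, mul_zero, add_zero]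
            intro hp
            exact hne (by rw [← succI_predI Γ s b' h0, hp])

lemma inDeg_single (a : Idx Γ s) : InDeg Γ s (idxDeg Γ s a) (Finsupp.single a (1 : ℂ)) := by
  refine ⟨fun p hp => Finsupp.single_eq_of_ne' ?_, fun q hq => Finsupp.single_eq_of_ne' ?_⟩
  · intro h; exact hp (by rw [h]; rfl)
  · intro h; exact hq (by rw [h]; rfl)

lemma inDeg_apply {ε : ℂ} {y : SV Γ s} (hy : InDeg Γ s ε y) (b : Idx Γ s)
    (hb : idxDeg Γ s b ≠ ε) : y b = 0 := by
  cases b with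
  | inl p => exact hy.1 p hb
  | inr q => exact hy.2 q hb

lemma L00_even : IsEvenElt Γ s (lgen Γ s 0 (zero_mem Γ) 0) := by
  intro b
  exact Finsupp.single_eq_of_ne (by simp)

lemma D_bkt_comm (hs : 2 * s ∈ Γ) (D : SV Γ s →ₗ[ℂ] SV Γ s) (hder : IsDer Γ s hs D)
    (hD0 : D (lgen Γ s 0 (zero_mem Γ) 0) = 0) (y : SV Γ s) :
    D (bkt Γ s hs (lgen Γ s 0 (zero_mem Γ) 0) y)
      = bkt Γ s hs (lgen Γ s 0 (zero_mem Γ) 0) (D y) := by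
  obtain ⟨D0, D1, h0, h1, rfl⟩ := hder
  have e0 := h0.2.2 (lgen Γ s 0 (zero_mem Γ) 0) y (Or.inl (L00_even Γ s))
  have e1 := h1.2.2.1 (lgen Γ s 0 (zero_mem Γ) 0) y (L00_even Γ s)
  rw [LinearMap.add_apply, LinearMap.add_apply, e0, e1, bkt_add_right]
  have hz : bkt Γ s hs (D0 (lgen Γ s 0 (zero_mem Γ) 0)) y
      + bkt Γ s hs (D1 (lgen Γ s 0 (zero_mem Γ) 0)) y = 0 := by
    rw [← bkt_add_left, ← LinearMap.add_apply, hD0, bkt_zero_left]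
  have hre : bkt Γ s hs (D0 (lgen Γ s 0 (zero_mem Γ) 0)) y
        + bkt Γ s hs (lgen Γ s 0 (zero_mem Γ) 0) (D0 y)
        + (bkt Γ s hs (D1 (lgen Γ s 0 (zero_mem Γ) 0)) y
          + bkt Γ s hs (lgen Γ s 0 (zero_mem Γ) 0) (D1 y))
      = (bkt Γ s hs (D0 (lgen Γ s 0 (zero_mem Γ) 0)) y
          + bkt Γ s hs (D1 (lgen Γ s 0 (zero_mem Γ) 0)) y)
        + (bkt Γ s hs (lgen Γ s 0 (zero_mem Γ) 0) (D0 y)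
          + bkt Γ s hs (lgen Γ s 0 (zero_mem Γ) 0) (D1 y)) := by abel
  rw [hre, hz, zero_add]

lemma vanish {γ : ℂ} (hγ : γ ≠ 0) (y : SV Γ s)
    (hrel : ∀ b, γ * y b = -((htI Γ s b : ℂ) + 1) * y (succI Γ s b)) : y = 0 := by
  set M := y.support.sup (htI Γ s) + 1 with hM
  have hbig : ∀ b, M ≤ htI Γ s b → y b = 0 := by
    intro b hb
    by_contra h
    have hmem : b ∈ y.support := Finsupp.mem_support_iff.2 h
    have := Finset.le_sup (f := htI Γ s) hmem
    omega
  have main : ∀ (d : ℕ) (b : Idx Γ s), M ≤ htI Γ s b + d → y b = 0 := by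
    intro d
    induction d with
    | zero => intro b hb; exact hbig b (by omega)
    | succ k ih =>
        intro b hb
        rcases le_or_gt M (htI Γ s b + k) with h | h
        · exact ih b h
        · have h2 : y (succI Γ s b) = 0 := by
            apply ih
            rw [htI_succI]
            omega
          have h3 := hrel b
          rw [h2, mul_zero] at h3
          exact (mul_eq_zero.1 h3).resolve_left hγ
  ext b
  exact main M b (Nat.le_add_left M _)

lemma step (hs : 2 * s ∈ Γ) {γ : ℂ} (hγ : γ ≠ 0) (D : SV Γ s →ₗ[ℂ] SV Γ s)
    (hder : IsDer Γ s hs D) (hdeg : HasDeg Γ s γ D)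
    (hD0 : D (lgen Γ s 0 (zero_mem Γ) 0) = 0) (a : Idx Γ s)
    (hlow : D ((htI Γ s a : ℂ) • Finsupp.single (predI Γ s a) 1) = 0) :
    D (Finsupp.single a 1) = 0 := by
  have hy : InDeg Γ s (idxDeg Γ s a + γ) (D (Finsupp.single a 1)) :=
    hdeg (idxDeg Γ s a) _ (inDeg_single Γ s a)
  have e := D_bkt_comm Γ s hs D hder hD0 (Finsupp.single a 1)
  rw [bkt_L00_single, map_add, hlow, add_zero, map_smul] at e
  apply vanish Γ s hγ
  intro b
  have eb := DFunLike.congr_fun e b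
  rw [Finsupp.smul_apply, smul_eq_mul, bkt_L00_apply] at eb
  by_cases hb : idxDeg Γ s b = idxDeg Γ s a + γ
  · rw [hb] at eb
    linear_combination -eb
  · have h1 : D (Finsupp.single a 1) b = 0 := inDeg_apply Γ s hy b hb
    have h2 : D (Finsupp.single a 1) (succI Γ s b) = 0 :=
      inDeg_apply Γ s hy _ (by rw [idxDeg_succI]; exact hb)
    rw [h1, h2]
    ring

/-- A derivation of `SV[Γ,s]` of nonzero degree `γ ∈ Ω` killing `L_{0,0}` is zero. -/
theorem derivation_nonzero_degree_vanishes (Γ : AddSubgroup ℂ) (hΓ : ∀ n : ℤ, (n : ℂ) ∈ Γ)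
    (s : ℂ) (hs : 2 * s ∈ Γ) :
    ∀ γ : ℂ, γ ∈ Omega Γ s → γ ≠ 0 →
      ∀ D : SV Γ s →ₗ[ℂ] SV Γ s, IsDer Γ s hs D → HasDeg Γ s γ D →
        D (lgen Γ s 0 (zero_mem Γ) 0) = 0 → D = 0 := by
  intro γ _hγΩ hγ D hder hdeg hD0
  have key : ∀ (j : ℕ) (a : Idx Γ s), htI Γ s a = j → D (Finsupp.single a 1) = 0 := by
    intro j
    induction j with
    | zero =>
        intro a ha
        apply step Γ s hs hγ D hder hdeg hD0 a
        rw [show ((htI Γ s a : ℂ)) = 0 by rw [ha]; exact Nat.cast_zero, zero_smul,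
          map_zero]
    | succ k ih =>
        intro a ha
        apply step Γ s hs hγ D hder hdeg hD0 a
        rw [map_smul, ih (predI Γ s a) (by rw [htI_predI, ha]; omega), smul_zero]
  apply Finsupp.lhom_ext
  intro a c
  have h1 : Finsupp.single a c = c • Finsupp.single a (1 : ℂ) := by
    rw [Finsupp.smul_single, smul_eq_mul, mul_one]
  rw [LinearMap.zero_apply, h1, map_smul, key (htI Γ s a) a rfl, smul_zero]

end SVSuper
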